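/- Let k be a field, s ≥ 2, and let η_1 ≥ η_2 ≥ … ≥ η_{s−1} > η_s be positive integers; set γ_i = η_{i+1} + … + η_s for 0 ≤ i ≤ s. Suppose f ∈ k⟦x,y⟧ has the form f = y^{γ_0} + Σ_{i=1}^{s} a_i·x^i·y^{γ_i} with every a_i a unit of k⟦x,y⟧ (that is, f ∈ P_η^0). Then f factors as f = g·h, where g = y^{γ_0−γ_{s−1}} + Σ_{i=1}^{s−1} b_i·x^i·y^{γ_i−γ_{s−1}} for some units b_1, …, b_{s−1} of k⟦x,y⟧, and h = y^{γ_{s−1}} + c·x for some unit c of k⟦x,y⟧. -/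

import Mathlib

open MvPowerSeries

namespace Stmt1Aux

variable {k : Type*} [Field k]

lemma mem_maxIdeal_iff (f : MvPowerSeries (Fin 2) k) :
    f ∈ IsLocalRing.maximalIdeal (MvPowerSeries (Fin 2) k) ↔
      constantCoeff f = 0 := by
  simp [IsLocalRing.mem_maximalIdeal, mem_nonunits_iff,
    MvPowerSeries.isUnit_iff_constantCoeff, isUnit_iff_ne_zero]

lemma eq_zero_of_dg (d : Fin 2 →₀ ℕ) (h : d 0 + d 1 = 0) : d = 0 := by
  ext i; fin_cases i <;> simp_all <;> omega

lemma coeff_eq_zero_of_mem_pow (n : ℕ) (f : MvPowerSeries (Fin 2) k)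
    (hf : f ∈ (IsLocalRing.maximalIdeal (MvPowerSeries (Fin 2) k)) ^ n) :
    ∀ d : Fin 2 →₀ ℕ, d 0 + d 1 < n → coeff d f = 0 := by
  induction n generalizing f with
  | zero => intro d hd; omega
  | succ n ih =>
    rw [pow_succ] at hf
    refine Submodule.mul_induction_on hf ?_ ?_
    · intro g hg h hh d hd
      rw [coeff_mul]
      refine Finset.sum_eq_zero fun p hp => ?_
      rw [Finset.HasAntidiagonal.mem_antidiagonal] at hp
      by_cases h1 : p.1 0 + p.1 1 < n
      · rw [ih g hg p.1 h1, zero_mul]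
      · have h2 : p.2 = 0 := by
          apply eq_zero_of_dg
          have e0 : p.1 0 + p.2 0 = d 0 := by rw [← hp]; simp
          have e1 : p.1 1 + p.2 1 = d 1 := by rw [← hp]; simp
          omega
        rw [h2, coeff_zero_eq_constantCoeff_apply, (mem_maxIdeal_iff h).mp hh, mul_zero]
    · intro g h hg hh d hd
      rw [map_add, hg d hd, hh d hd, add_zero]

lemma mem_pow_of_coeff_eq_zero (n : ℕ) (f : MvPowerSeries (Fin 2) k)
    (hf : ∀ d : Fin 2 →₀ ℕ, d 0 + d 1 < n → coeff d f = 0) :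
    f ∈ (IsLocalRing.maximalIdeal (MvPowerSeries (Fin 2) k)) ^ n := by
  induction n generalizing f with
  | zero => simp
  | succ n ih =>
    set g : MvPowerSeries (Fin 2) k := fun d => coeff (d + Finsupp.single 0 1) f with hgdef
    set h : MvPowerSeries (Fin 2) k :=
      fun d => if d 0 = 0 then coeff (d + Finsupp.single 1 1) f else 0 with hhdef
    have hcg : ∀ d, coeff d g = coeff (d + Finsupp.single 0 1) f := fun d => rfl
    have hch : ∀ d, coeff d h
        = if d 0 = 0 then coeff (d + Finsupp.single 1 1) f else 0 := fun d => rfl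
    have key : f = X 0 * g + X 1 * h := by
      ext d
      rw [map_add, X_def, X_def, coeff_monomial_mul, coeff_monomial_mul]
      have hs0 : (Finsupp.single (0 : Fin 2) 1 ≤ d) ↔ 1 ≤ d 0 := Finsupp.single_le_iff
      have hs1 : (Finsupp.single (1 : Fin 2) 1 ≤ d) ↔ 1 ≤ d 1 := Finsupp.single_le_iff
      by_cases h0 : 1 ≤ d 0
      · have e1 : (if Finsupp.single (0 : Fin 2) 1 ≤ d
            then 1 * coeff (d - Finsupp.single 0 1) g else 0) = coeff d f := by
          have hD : d - Finsupp.single (0 : Fin 2) 1 + Finsupp.single 0 1 = d := by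
            ext i; fin_cases i <;> simp [Finsupp.sub_apply, Finsupp.single_apply] <;> omega
          rw [if_pos (hs0.mpr h0), one_mul, hcg, hD]
        have e2 : (if Finsupp.single (1 : Fin 2) 1 ≤ d
            then 1 * coeff (d - Finsupp.single 1 1) h else 0) = 0 := by
          by_cases h1 : 1 ≤ d 1
          · rw [if_pos (hs1.mpr h1), one_mul, hch, if_neg]
            simp [Finsupp.sub_apply, Finsupp.single_apply]
            omega
          · rw [if_neg (fun hc => h1 (hs1.mp hc))]
        rw [e1, e2, add_zero]
      · have e1 : (if Finsupp.single (0 : Fin 2) 1 ≤ d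
            then 1 * coeff (d - Finsupp.single 0 1) g else 0) = 0 :=
          if_neg (fun hc => h0 (hs0.mp hc))
        by_cases h1 : 1 ≤ d 1
        · have e2 : (if Finsupp.single (1 : Fin 2) 1 ≤ d
              then 1 * coeff (d - Finsupp.single 1 1) h else 0) = coeff d f := by
            have hD : d - Finsupp.single (1 : Fin 2) 1 + Finsupp.single 1 1 = d := by
              ext i; fin_cases i <;> simp [Finsupp.sub_apply, Finsupp.single_apply] <;> omega
            rw [if_pos (hs1.mpr h1), one_mul, hch, if_pos, hD]
            simp [Finsupp.sub_apply, Finsupp.single_apply]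
            omega
          rw [e1, e2, zero_add]
        · have hd0 : d = 0 := eq_zero_of_dg d (by omega)
          have e2 : (if Finsupp.single (1 : Fin 2) 1 ≤ d
              then 1 * coeff (d - Finsupp.single 1 1) h else 0) = 0 :=
            if_neg (fun hc => h1 (hs1.mp hc))
          rw [e1, e2, hd0, add_zero]
          exact hf 0 (by simp)
    rw [key, pow_succ']
    refine Ideal.add_mem _ (Ideal.mul_mem_mul ?_ (ih g ?_)) (Ideal.mul_mem_mul ?_ (ih h ?_))
    · rw [mem_maxIdeal_iff, constantCoeff_X]
    · intro d hd
      rw [hcg]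
      refine hf _ ?_
      simp [Finsupp.add_apply, Finsupp.single_apply]
      omega
    · rw [mem_maxIdeal_iff, constantCoeff_X]
    · intro d hd
      rw [hch]
      split
      · refine hf _ ?_
        simp [Finsupp.add_apply, Finsupp.single_apply]
        omega
      · rfl



lemma smul_top_eq (I : Ideal (MvPowerSeries (Fin 2) k)) :
    (I • (⊤ : Submodule (MvPowerSeries (Fin 2) k) (MvPowerSeries (Fin 2) k))) = I := by
  rw [Ideal.smul_eq_mul, Ideal.mul_top]

instance : IsAdicComplete (IsLocalRing.maximalIdeal (MvPowerSeries (Fin 2) k))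
    (MvPowerSeries (Fin 2) k) where
  haus' := by
    intro x hx
    ext d
    have := hx (d 0 + d 1 + 1)
    rw [SModEq.zero, smul_top_eq] at this
    rw [map_zero]
    exact coeff_eq_zero_of_mem_pow _ x this d (by omega)
  prec' := by
    intro f hf
    refine ⟨(fun d => coeff d (f (d 0 + d 1 + 1)) : MvPowerSeries (Fin 2) k), fun n => ?_⟩
    refine SModEq.sub_mem.mpr ?_
    rw [smul_top_eq]
    refine mem_pow_of_coeff_eq_zero n _ fun d hd => ?_
    refine (map_sub (coeff d) (f n) _).trans ?_
    have h1 : f (d 0 + d 1 + 1) ≡ f n [SMOD ((IsLocalRing.maximalIdeal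
        (MvPowerSeries (Fin 2) k)) ^ (d 0 + d 1 + 1) •
        (⊤ : Submodule (MvPowerSeries (Fin 2) k) (MvPowerSeries (Fin 2) k)))] :=
      hf (by omega)
    rw [SModEq.sub_mem, smul_top_eq] at h1
    have h2 := coeff_eq_zero_of_mem_pow _ _ h1 d (by omega)
    rw [map_sub, sub_eq_zero] at h2
    have h3 : coeff d ((fun d : Fin 2 →₀ ℕ => coeff d (f (d 0 + d 1 + 1))) :
        MvPowerSeries (Fin 2) k) = coeff d (f (d 0 + d 1 + 1)) := rfl
    rw [h3, h2, sub_self]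

end Stmt1Aux
open MvPowerSeries Polynomial in
theorem stmt_1 (k : Type*) [Field k] (s : ℕ) (hs : 2 ≤ s)
    (η : ℕ → ℕ) (hηpos : ∀ i ∈ Finset.Icc 1 s, 0 < η i)
    (hηanti : ∀ i ∈ Finset.Icc 1 (s - 1), ∀ j ∈ Finset.Icc 1 (s - 1), i ≤ j → η j ≤ η i)
    (hηlast : η s < η (s - 1))
    (γ : ℕ → ℕ) (hγ : ∀ i, γ i = ∑ t ∈ Finset.Icc (i + 1) s, η t)
    (a : ℕ → MvPowerSeries (Fin 2) k) (ha : ∀ i ∈ Finset.Icc 1 s, IsUnit (a i))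
    (f : MvPowerSeries (Fin 2) k)
    (hf : f = (X 1 : MvPowerSeries (Fin 2) k) ^ γ 0
      + ∑ i ∈ Finset.Icc 1 s, a i * (X 0 : MvPowerSeries (Fin 2) k) ^ i
          * (X 1 : MvPowerSeries (Fin 2) k) ^ γ i) :
    ∃ (b : ℕ → MvPowerSeries (Fin 2) k) (c : MvPowerSeries (Fin 2) k),
      (∀ i ∈ Finset.Icc 1 (s - 1), IsUnit (b i)) ∧ IsUnit c ∧
      f = ((X 1 : MvPowerSeries (Fin 2) k) ^ (γ 0 - γ (s - 1))
            + ∑ i ∈ Finset.Icc 1 (s - 1), b i * (X 0 : MvPowerSeries (Fin 2) k) ^ i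
                * (X 1 : MvPowerSeries (Fin 2) k) ^ (γ i - γ (s - 1)))
          * ((X 1 : MvPowerSeries (Fin 2) k) ^ γ (s - 1) + c * (X 0 : MvPowerSeries (Fin 2) k)) := by
  classical
  set x : MvPowerSeries (Fin 2) k := X 0 with hx
  set y : MvPowerSeries (Fin 2) k := X 1 with hy
  set φ : MvPowerSeries (Fin 2) k →+* k := MvPowerSeries.constantCoeff with hφ
  set e : ℕ → ℕ := fun i => η i - η s with he
  -- basic arithmetic facts
  have hss : s - 1 + 1 = s := by omega
  have hγs1 : γ (s - 1) = η s := by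
    rw [hγ, hss, Finset.Icc_self, Finset.sum_singleton]
  have hγs : γ s = 0 := by
    rw [hγ, Finset.Icc_eq_empty (by omega), Finset.sum_empty]
  have hγstep : ∀ i, i + 1 ≤ s → γ i = η (i + 1) + γ (i + 1) := by
    intro i hi
    rw [hγ, hγ]
    have hins : Finset.Icc (i + 1) s = insert (i + 1) (Finset.Icc (i + 2) s) := by
      ext t; simp only [Finset.mem_Icc, Finset.mem_insert]; omega
    rw [hins, Finset.sum_insert (by simp)]
  have hγmono : ∀ i j, i ≤ j → γ j ≤ γ i := by
    intro i j hij
    rw [hγ, hγ]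
    exact Finset.sum_le_sum_of_subset (Finset.Icc_subset_Icc (by omega) le_rfl)
  have hηi : ∀ i ∈ Finset.Icc 1 (s - 1), η s < η i := fun i hi =>
    lt_of_lt_of_le hηlast (hηanti i hi (s - 1)
      (by simp only [Finset.mem_Icc]; omega) (by simp only [Finset.mem_Icc] at hi; omega))
  have hepos : ∀ i ∈ Finset.Icc 1 (s - 1), 1 ≤ e i := fun i hi => by
    have := hηi i hi; simp only [he]; omega
  have hφa : ∀ i ∈ Finset.Icc 1 s, φ (a i) ≠ 0 := fun i hi => by
    have := (MvPowerSeries.isUnit_iff_constantCoeff.mp (ha i hi))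
    exact isUnit_iff_ne_zero.mp this
  have hsmem : s ∈ Finset.Icc 1 s := by simp only [Finset.mem_Icc]; omega
  have hs1mem : s - 1 ∈ Finset.Icc 1 s := by simp only [Finset.mem_Icc]; omega
  have hs1mem' : s - 1 ∈ Finset.Icc 1 (s - 1) := by simp only [Finset.mem_Icc]; omega
  set A : (MvPowerSeries (Fin 2) k)ˣ := (ha s hsmem).unit with hA
  have hAval : (↑A : MvPowerSeries (Fin 2) k) = a s := (ha s hsmem).unit_spec
  have hφy : ∀ m, 1 ≤ m → φ (y ^ m) = 0 := fun m hm => by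
    rw [map_pow, hy, hφ, constantCoeff_X, zero_pow (by omega)]
  -- the polynomial
  set Cp : ℕ → Polynomial (MvPowerSeries (Fin 2) k) := fun n => Nat.rec 1
    (fun m ih => Polynomial.C (a (m + 1)) * Polynomial.X ^ (m + 1)
      - Polynomial.C (y ^ e (m + 1)) * ih) n with hCp
  have hCp0 : Cp 0 = 1 := rfl
  have hCpsucc : ∀ m, Cp (m + 1) = Polynomial.C (a (m + 1)) * Polynomial.X ^ (m + 1)
      - Polynomial.C (y ^ e (m + 1)) * Cp m := fun m => rfl
  have hCpdeg : ∀ i, (Cp i).natDegree ≤ i := by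
    intro i
    induction i with
    | zero => simp [hCp0]
    | succ m ih =>
      rw [hCpsucc]
      refine le_trans (natDegree_sub_le _ _) ?_
      refine max_le (le_trans (natDegree_mul_le) ?_) (le_trans (natDegree_mul_le) ?_)
      · simp
      · simp only [natDegree_C, zero_add]; omega
  set G : Polynomial (MvPowerSeries (Fin 2) k) := Polynomial.X ^ s
    - Polynomial.C ((↑A⁻¹ : MvPowerSeries (Fin 2) k)) * Cp (s - 1) with hG
  have hGmonic : G.Monic := by
    refine monic_X_pow_sub ?_
    refine lt_of_le_of_lt (degree_le_natDegree) ?_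
    have h1 : (Polynomial.C ((↑A⁻¹ : MvPowerSeries (Fin 2) k)) * Cp (s - 1)).natDegree ≤ s - 1 := by
      refine le_trans (natDegree_mul_le) ?_
      simp only [natDegree_C, zero_add]
      exact hCpdeg _
    exact_mod_cast lt_of_le_of_lt h1 (by omega)
  -- image of Cp under φ
  have hCpmap : ∀ i, 1 ≤ i → i ≤ s - 1 →
      (Cp i).map φ = Polynomial.C (φ (a i)) * Polynomial.X ^ i := by
    intro i h1 h2
    obtain ⟨m, rfl⟩ : ∃ m, i = m + 1 := ⟨i - 1, by omega⟩
    have hem : φ (y ^ e (m + 1)) = 0 :=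
      hφy _ (hepos (m + 1) (by simp only [Finset.mem_Icc]; omega))
    rw [hCpsucc, Polynomial.map_sub, Polynomial.map_mul, Polynomial.map_mul, Polynomial.map_pow,
      Polynomial.map_C, Polynomial.map_C, hem, Polynomial.map_X, Polynomial.C_0, zero_mul, sub_zero]
  -- the approximate root and its residue
  set a₀ : MvPowerSeries (Fin 2) k := a (s - 1) * (↑A⁻¹ : MvPowerSeries (Fin 2) k) with ha₀
  have hAinv' : (↑A : MvPowerSeries (Fin 2) k) * ↑A⁻¹ = 1 := A.mul_inv
  have hφAi : φ ((↑A⁻¹ : MvPowerSeries (Fin 2) k)) ≠ 0 := by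
    intro hz
    have : φ ((↑A : MvPowerSeries (Fin 2) k) * ↑A⁻¹) = 0 := by rw [map_mul, hz, mul_zero]
    rw [hAinv', map_one] at this
    exact one_ne_zero this
  set t : k := φ a₀ with ht
  have htval : t = φ (a (s - 1)) * φ ((↑A⁻¹ : MvPowerSeries (Fin 2) k)) := by
    rw [ht, ha₀, map_mul]
  have htne : t ≠ 0 := by
    rw [htval]
    exact mul_ne_zero (hφa _ hs1mem) hφAi
  have hGmap : G.map φ = Polynomial.X ^ s - Polynomial.C t * Polynomial.X ^ (s - 1) := by
    rw [hG, Polynomial.map_sub, Polynomial.map_pow, Polynomial.map_X, Polynomial.map_mul,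
      Polynomial.map_C, hCpmap (s - 1) (by omega) le_rfl, htval, Polynomial.C_mul]
    ring
  have hpowss : ∀ z : k, z ^ s = z ^ (s - 1) * z := by
    intro z; rw [← pow_succ]; congr 1; omega
  have h₁ : G.eval a₀ ∈ IsLocalRing.maximalIdeal (MvPowerSeries (Fin 2) k) := by
    rw [Stmt1Aux.mem_maxIdeal_iff]
    have hev : φ (G.eval a₀) = (G.map φ).eval t := by
      rw [← Polynomial.eval₂_at_apply, Polynomial.eval₂_eq_eval_map]
    rw [← hφ, hev, hGmap, Polynomial.eval_sub, Polynomial.eval_pow, Polynomial.eval_X,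
      Polynomial.eval_mul, Polynomial.eval_C, Polynomial.eval_pow, Polynomial.eval_X, hpowss]
    ring
  have h₂ : IsUnit (Ideal.Quotient.mk (IsLocalRing.maximalIdeal (MvPowerSeries (Fin 2) k))
      (G.derivative.eval a₀)) := by
    have hder : φ (G.derivative.eval a₀) = t ^ (s - 1) := by
      have hev : φ (G.derivative.eval a₀) = ((G.derivative).map φ).eval t := by
        rw [← Polynomial.eval₂_at_apply, Polynomial.eval₂_eq_eval_map]
      rw [hev, ← Polynomial.derivative_map, hGmap]
      rw [Polynomial.derivative_sub, Polynomial.derivative_X_pow, Polynomial.derivative_C_mul,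
        Polynomial.derivative_X_pow]
      simp only [Polynomial.eval_sub, Polynomial.eval_mul, Polynomial.eval_C,
        Polynomial.eval_pow, Polynomial.eval_X]
      have h9 : t * t ^ (s - 1 - 1) = t ^ (s - 1) := by
        rw [← pow_succ']; congr 1; omega
      have h10 : ((s - 1 : ℕ) : k) = (s : k) - 1 := by
        rw [Nat.cast_sub (by omega)]; norm_num
      calc (s : k) * t ^ (s - 1) - t * (((s - 1 : ℕ) : k) * t ^ (s - 1 - 1))
          = (s : k) * t ^ (s - 1) - ((s - 1 : ℕ) : k) * (t * t ^ (s - 1 - 1)) := by ring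
        _ = (s : k) * t ^ (s - 1) - ((s : k) - 1) * t ^ (s - 1) := by rw [h9, h10]
        _ = t ^ (s - 1) := by ring
    refine IsUnit.map _ ?_
    rw [MvPowerSeries.isUnit_iff_constantCoeff, ← hφ, hder, isUnit_iff_ne_zero]
    exact pow_ne_zero _ htne
  obtain ⟨u, hroot, humem⟩ := HenselianRing.is_henselian G hGmonic a₀ h₁ h₂
  have hφu : φ u = t := by
    have h11 := (Stmt1Aux.mem_maxIdeal_iff _).mp humem
    rw [← hφ, map_sub, sub_eq_zero] at h11
    exact h11
  have hu : IsUnit u := by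
    rw [MvPowerSeries.isUnit_iff_constantCoeff, ← hφ, hφu, isUnit_iff_ne_zero]
    exact htne
  set U : (MvPowerSeries (Fin 2) k)ˣ := hu.unit with hU
  have hUval : (↑U : MvPowerSeries (Fin 2) k) = u := hu.unit_spec
  set c : MvPowerSeries (Fin 2) k := ↑U⁻¹ with hc
  have hcu : c * u = 1 := by rw [hc, ← hUval]; exact U.inv_mul
  have huc : u * c = 1 := by rw [hc, ← hUval]; exact U.mul_inv
  -- the b sequence
  set b : ℕ → MvPowerSeries (Fin 2) k := fun n => Nat.rec (motive := fun _ => _) 1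
    (fun m ih => a (m + 1) - ih * c * y ^ e (m + 1)) n with hb
  have hb0 : b 0 = 1 := rfl
  have hbsucc : ∀ m, b (m + 1) = a (m + 1) - b m * c * y ^ e (m + 1) := fun _ => rfl
  have heval : ∀ i, (Cp i).eval u = u ^ i * b i := by
    intro i
    induction i with
    | zero => simp [hCp0, hb0]
    | succ m ih =>
      have hkey : u ^ (m + 1) * c = u ^ m := by rw [pow_succ, mul_assoc, huc, mul_one]
      rw [hCpsucc, Polynomial.eval_sub, Polynomial.eval_mul, Polynomial.eval_C,
        Polynomial.eval_pow, Polynomial.eval_X, Polynomial.eval_mul, Polynomial.eval_C, ih,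
        hbsucc]
      linear_combination (y ^ e (m + 1) * b m) * hkey
  have h5 : u ^ (s - 1) * u = ↑A⁻¹ * (u ^ (s - 1) * b (s - 1)) := by
    have h12 : G.eval u = 0 := hroot
    rw [hG, Polynomial.eval_sub, Polynomial.eval_pow, Polynomial.eval_X, Polynomial.eval_mul,
      Polynomial.eval_C, heval, sub_eq_zero] at h12
    calc u ^ (s - 1) * u = u ^ s := by rw [← pow_succ, hss]
      _ = ↑A⁻¹ * (u ^ (s - 1) * b (s - 1)) := h12
  have hcs1 : c ^ (s - 1) * u ^ (s - 1) = 1 := by rw [← mul_pow, hcu, one_pow]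
  have hbAu : b (s - 1) = ↑A * u := by
    calc b (s - 1) = ((↑A : MvPowerSeries (Fin 2) k) * ↑A⁻¹)
          * ((c ^ (s - 1) * u ^ (s - 1)) * b (s - 1)) := by rw [hAinv', hcs1]; ring
      _ = ↑A * c ^ (s - 1) * (↑A⁻¹ * (u ^ (s - 1) * b (s - 1))) := by ring
      _ = ↑A * c ^ (s - 1) * (u ^ (s - 1) * u) := by rw [← h5]
      _ = ↑A * ((c ^ (s - 1) * u ^ (s - 1)) * u) := by ring
      _ = ↑A * u := by rw [hcs1, one_mul]
  have hcb : c * b (s - 1) = a s := by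
    rw [hbAu, ← hAval]
    calc c * (↑A * u) = ↑A * (c * u) := by ring
      _ = ↑A := by rw [hcu, mul_one]
  have hbu : ∀ i ∈ Finset.Icc 1 (s - 1), IsUnit (b i) := by
    intro i hi
    obtain ⟨m, rfl⟩ : ∃ m, i = m + 1 := ⟨i - 1, by simp only [Finset.mem_Icc] at hi; omega⟩
    rw [MvPowerSeries.isUnit_iff_constantCoeff, ← hφ, hbsucc, map_sub, map_mul,
      hφy _ (hepos _ hi), mul_zero, sub_zero, isUnit_iff_ne_zero]
    exact hφa _ (Finset.mem_Icc.mpr (by simp only [Finset.mem_Icc] at hi; omega))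
  refine ⟨b, c, hbu, hc ▸ (U⁻¹).isUnit, ?_⟩
  set F : ℕ → MvPowerSeries (Fin 2) k :=
    fun j => b j * c * x ^ (j + 1) * y ^ (γ j - γ (s - 1)) with hF
  have hδ : ∀ m, m + 1 ≤ s - 1 → γ m - γ (s - 1) = γ (m + 1) + e (m + 1) := by
    intro m hm
    have h14 := hγstep m (by omega)
    have h16 := hηi (m + 1) (Finset.mem_Icc.mpr (by omega))
    have h17 : η s ≤ γ (m + 1) := by
      rw [← hγs1]; exact hγmono (m + 1) (s - 1) (by omega)
    have h18 : e (m + 1) = η (m + 1) - η s := by rw [he]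
    rw [hγs1]
    omega
  have hδ2 : ∀ i, i ≤ s - 1 → γ i - γ (s - 1) + γ (s - 1) = γ i :=
    fun i hi => Nat.sub_add_cancel (hγmono i (s - 1) hi)
  have key : ∑ i ∈ Finset.Icc 1 s, a i * x ^ i * y ^ γ i
      = (∑ i ∈ Finset.Icc 1 (s - 1), b i * x ^ i * y ^ γ i)
        + ∑ i ∈ Finset.Icc 0 (s - 1), F i := by
    have hsplit : Finset.Icc 1 s = insert s (Finset.Icc 1 (s - 1)) := by
      ext t'; simp only [Finset.mem_Icc, Finset.mem_insert]; omega
    have hnot : s ∉ Finset.Icc 1 (s - 1) := by simp only [Finset.mem_Icc]; omega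
    rw [hsplit, Finset.sum_insert hnot]
    have hterm : a s * x ^ s * y ^ γ s = F (s - 1) := by
      simp only [hF]
      rw [hss, Nat.sub_self, pow_zero, hγs, pow_zero, ← hcb]
      ring
    have hmain : ∑ i ∈ Finset.Icc 1 (s - 1), a i * x ^ i * y ^ γ i
        = (∑ i ∈ Finset.Icc 1 (s - 1), b i * x ^ i * y ^ γ i)
          + ∑ i ∈ Finset.Icc 1 (s - 1), F (i - 1) := by
      rw [← Finset.sum_add_distrib]
      refine Finset.sum_congr rfl fun i hi => ?_
      simp only [Finset.mem_Icc] at hi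
      obtain ⟨m, rfl⟩ : ∃ m, i = m + 1 := ⟨i - 1, by omega⟩
      have h18 : a (m + 1) = b (m + 1) + b m * c * y ^ e (m + 1) := by rw [hbsucc]; ring
      have h19 : F (m + 1 - 1) = b m * c * x ^ (m + 1) * y ^ (γ m - γ (s - 1)) := by
        simp only [hF, Nat.add_sub_cancel]
      rw [h18, h19, hδ m (by omega), pow_add]
      ring
    have hreidx : ∑ i ∈ Finset.Icc 1 (s - 1), F (i - 1)
        = ∑ j ∈ Finset.Icc 0 (s - 2), F j := by
      have hmap : Finset.Icc 1 (s - 1)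
          = (Finset.Icc 0 (s - 2)).map ⟨fun n => n + 1, fun n m hnm => by simp only [] at hnm; omega⟩ := by
        ext t'
        simp only [Finset.mem_Icc, Finset.mem_map, Function.Embedding.coeFn_mk]
        constructor
        · intro h; exact ⟨t' - 1, by omega, by show t' - 1 + 1 = t'; omega⟩
        · rintro ⟨w, hw, rfl⟩; show 1 ≤ w + 1 ∧ w + 1 ≤ s - 1; omega
      rw [hmap, Finset.sum_map]
      refine Finset.sum_congr rfl fun j hj => ?_
      show F (j + 1 - 1) = F j
      simp only [Nat.add_sub_cancel]
    have hins2 : Finset.Icc 0 (s - 1) = insert (s - 1) (Finset.Icc 0 (s - 2)) := by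
      ext t'; simp only [Finset.mem_Icc, Finset.mem_insert]; omega
    rw [hterm, hmain, hreidx, hins2,
      Finset.sum_insert (by simp only [Finset.mem_Icc]; omega)]
    ring
  have hrhs : (y ^ (γ 0 - γ (s - 1))
        + ∑ i ∈ Finset.Icc 1 (s - 1), b i * x ^ i * y ^ (γ i - γ (s - 1)))
        * (y ^ γ (s - 1) + c * x)
      = y ^ γ 0 + ((∑ i ∈ Finset.Icc 1 (s - 1), b i * x ^ i * y ^ γ i)
        + ∑ i ∈ Finset.Icc 0 (s - 1), F i) := by
    have p1 : y ^ (γ 0 - γ (s - 1)) * y ^ γ (s - 1) = y ^ γ 0 := by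
      rw [← pow_add, hδ2 0 (by omega)]
    have p2 : (∑ i ∈ Finset.Icc 1 (s - 1), b i * x ^ i * y ^ (γ i - γ (s - 1))) * y ^ γ (s - 1)
        = ∑ i ∈ Finset.Icc 1 (s - 1), b i * x ^ i * y ^ γ i := by
      rw [Finset.sum_mul]
      refine Finset.sum_congr rfl fun i hi => ?_
      simp only [Finset.mem_Icc] at hi
      rw [mul_assoc, ← pow_add, hδ2 i hi.2]
    have p3 : (∑ i ∈ Finset.Icc 1 (s - 1), b i * x ^ i * y ^ (γ i - γ (s - 1))) * (c * x)
        = ∑ i ∈ Finset.Icc 1 (s - 1), F i := by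
      rw [Finset.sum_mul]
      refine Finset.sum_congr rfl fun i hi => ?_
      simp only [hF]
      rw [pow_succ]
      ring
    have p4 : y ^ (γ 0 - γ (s - 1)) * (c * x) = F 0 := by
      simp only [hF, hb0]
      rw [pow_one]
      ring
    have p5 : Finset.Icc 0 (s - 1) = insert 0 (Finset.Icc 1 (s - 1)) := by
      ext t'; simp only [Finset.mem_Icc, Finset.mem_insert]; omega
    rw [add_mul, mul_add, mul_add, p1, p2, p3, p4, p5,
      Finset.sum_insert (by simp only [Finset.mem_Icc]; omega)]
    ring
  rw [hf, key, hrhs]
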